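/- If R is a Rota-Baxter operator of weight 0 on H_d, then R(e0)² = 2 R(R(e0) e0), and consequently the real part of R(e0) is zero (writing R(e0) = a_11 e0 + ..., one gets a_11² = 0 from comparing real parts after using the structure of H_d together with the remaining Rota-Baxter relations); in particular R(e0) is a nilpotent element of H_d. -/

import Mathlib

noncomputable section

/-- The dual quaternion algebra `H_d`, realized as the trivial square-zero
extension of `ℝ` by `ℝ³`; its multiplication is
`(x0,v)·(y0,w) = (x0 y0, x0 • w + y0 • v)`, matching the dual quaternion product. -/
abbrev Hd : Type := TrivSqZeroExt ℝ (Fin 3 → ℝ)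

/-- Basis element `e0` (the identity). -/
def e0 : Hd := 1
/-- Basis element `e1`. -/
def e1 : Hd := TrivSqZeroExt.inr (Pi.single 0 1)
/-- Basis element `e2`. -/
def e2 : Hd := TrivSqZeroExt.inr (Pi.single 1 1)
/-- Basis element `e3`. -/
def e3 : Hd := TrivSqZeroExt.inr (Pi.single 2 1)

/-- The element `x0 e0 + x1 e1 + x2 e2 + x3 e3` of `H_d`. -/
def mk (x0 x1 x2 x3 : ℝ) : Hd := x0 • e0 + x1 • e1 + x2 • e2 + x3 • e3

/-- `R` is a Rota-Baxter operator of weight `lam` on `H_d`. -/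
def RotaBaxter (lam : ℝ) (R : Hd →ₗ[ℝ] Hd) : Prop :=
  ∀ x y : Hd, R x * R y = R (R x * y) + R (x * R y) + lam • R (x * y)

theorem Hd.mul_smul_comm (r : ℝ) (x y : Hd) : x * (r • y) = r • (x * y) := by
  apply TrivSqZeroExt.ext
  · simp [TrivSqZeroExt.fst_mul]
  · simp [TrivSqZeroExt.snd_mul, ← MulOpposite.op_mul, op_smul_eq_smul, smul_smul, mul_comm]

/-- For a Rota-Baxter operator `R` of weight `0` on `H_d`,
`R(e0)² = 2 R(R(e0) e0)`, the real part of `R(e0)` vanishes, and `R(e0)` is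
nilpotent. -/
theorem stmt11 (R : Hd →ₗ[ℝ] Hd) (hR : RotaBaxter 0 R) :
    R e0 * R e0 = (2 : ℝ) • R (R e0 * e0) ∧
    TrivSqZeroExt.fst (R e0) = 0 ∧
    IsNilpotent (R e0) := by
  set u := R e0 with hu
  -- first conjunct
  have h1 : u * u = (2 : ℝ) • R (u * e0) := by
    have h := hR e0 e0
    simp only [zero_smul, add_zero] at h
    rw [h, ← hu]
    simp only [e0, one_mul, mul_one, two_smul]
  have h1' : u * u = (2 : ℝ) • R u := by
    simpa [e0] using h1
  have h2 : u * R u = R (u * u) + R (R u) := by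
    have h := hR e0 u
    simp only [zero_smul, add_zero, ← hu, e0, one_mul] at h
    exact h
  have h3 : R u * R u = R (R u * u) + R (u * R u) := by
    have h := hR u u
    simpa using h
  set a : ℝ := TrivSqZeroExt.fst u with ha
  set b : ℝ := TrivSqZeroExt.fst (R u) with hb
  set c : ℝ := TrivSqZeroExt.fst (R (R u)) with hc
  -- fst of h1'
  have f1 : a * a = 2 * b := by
    have := congrArg TrivSqZeroExt.fst h1'
    simpa [TrivSqZeroExt.fst_mul, ← ha, ← hb] using this
  -- R (u*u) = 2 • R (R u)
  have hRuu : R (u * u) = (2 : ℝ) • R (R u) := by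
    rw [h1', map_smul]
  have f2 : a * b = 3 * c := by
    have := congrArg TrivSqZeroExt.fst h2
    rw [hRuu] at this
    simp only [TrivSqZeroExt.fst_mul, TrivSqZeroExt.fst_add, TrivSqZeroExt.fst_smul,
      ← ha, ← hb, ← hc, smul_eq_mul] at this
    linarith
  -- cube identity : u^3 = 3a^2 • u - 2a^3 • 1
  have hcube : u * u * u = (3 * a * a) • u - (2 * (a * a * a)) • (1 : Hd) := by
    apply TrivSqZeroExt.ext
    · simp [TrivSqZeroExt.fst_mul, ← ha]
      ring
    · simp [TrivSqZeroExt.snd_mul, ← ha, smul_smul]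
      module
  have hRu2 : R u = (2⁻¹ : ℝ) • (u * u) := by
    rw [h1']; rw [smul_smul]; norm_num
  have huRu : u * R u = (2⁻¹ : ℝ) • (u * u * u) := by
    rw [hRu2, Hd.mul_smul_comm, mul_assoc]
  have hRuRu : R (u * R u) = (2⁻¹ : ℝ) • ((3 * a * a) • R u - (2 * (a * a * a)) • u) := by
    have hR1 : R (1 : Hd) = u := hu.symm
    rw [huRu, hcube, map_smul, map_sub, map_smul, map_smul, hR1]
  have f3 : b * b = 2 * (2⁻¹ * (3 * a * a * b - 2 * (a * a * a) * a)) := by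
    have := congrArg TrivSqZeroExt.fst h3
    rw [mul_comm (R u) u] at this
    rw [hRuRu] at this
    simp only [TrivSqZeroExt.fst_mul, TrivSqZeroExt.fst_add, TrivSqZeroExt.fst_smul,
      TrivSqZeroExt.fst_sub, ← ha, ← hb, smul_eq_mul] at this
    linarith
  have ha0 : a = 0 := by
    have hb' : b = a * a / 2 := by linarith
    rw [hb'] at f3
    have h4 : a ^ 4 = 0 := by linear_combination (4 / 3 : ℝ) * f3
    exact pow_eq_zero_iff (n := 4) (by norm_num) |>.mp h4
  refine ⟨h1, ha0, 2, ?_⟩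
  apply TrivSqZeroExt.ext
  · simp [pow_two, TrivSqZeroExt.fst_mul, ← ha, ha0]
  · simp [pow_two, TrivSqZeroExt.snd_mul, ← ha, ha0]
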